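/- Define G(t) = ∫_1^t (x/(x−1))^{1/2} dx for t ≥ 1. Then G is strictly increasing, maps [1,∞) onto [0,∞), and the function h(s) = G⁻¹(√2 |s|) is a C² function on ℝ satisfying h(s)² · h''(s) = 1 for all s, with h(0) = 1, h'(0) = 0, h ≥ 1, and h convex. -/

import Mathlib

open Real Set Filter

open MeasureTheory intervalIntegral

set_option linter.unreachableTactic false
set_option linter.unusedTactic false
set_option linter.unusedVariables false
set_option linter.unnecessarySimpa false


noncomputable def fInt (x : ℝ) : ℝ := Real.sqrt (x / (x - 1))

lemma fInt_nonneg (x : ℝ) : 0 ≤ fInt x := Real.sqrt_nonneg _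

lemma fInt_one : fInt 1 = 0 := by simp [fInt]

lemma one_le_fInt {x : ℝ} (hx : 1 < x) : 1 ≤ fInt x := by
  have h1 : (0:ℝ) < x - 1 := by linarith
  have : (1:ℝ) ≤ x / (x - 1) := (one_le_div h1).2 (by linarith)
  calc (1:ℝ) = Real.sqrt 1 := by simp
  _ ≤ fInt x := Real.sqrt_le_sqrt this

lemma fInt_le {t x : ℝ} (hx : 1 ≤ x) (hxt : x ≤ t) :
    fInt x ≤ Real.sqrt t * (x - 1) ^ (-(1/2) : ℝ) := by
  rcases eq_or_lt_of_le hx with rfl | hx1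
  · simp [fInt, Real.rpow_def_of_neg]
  · have h1 : (0:ℝ) < x - 1 := by linarith
    have hrw : (x - 1) ^ (-(1/2) : ℝ) = (Real.sqrt (x-1))⁻¹ := by
      rw [Real.rpow_neg h1.le, Real.sqrt_eq_rpow]
    rw [hrw, fInt, Real.sqrt_div (by linarith : (0:ℝ) ≤ x), div_eq_mul_inv]
    gcongr
    all_goals first
      | exact inv_nonneg.2 (Real.sqrt_nonneg _)
      | exact Real.sqrt_le_sqrt (by linarith)

lemma fInt_ge {x : ℝ} (hx : 1 ≤ x) : (x - 1) ^ (-(1/2) : ℝ) ≤ fInt x := by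
  rcases eq_or_lt_of_le hx with rfl | hx1
  · simp [fInt, Real.rpow_def_of_neg]
  · have h1 : (0:ℝ) < x - 1 := by linarith
    have hrw : (x - 1) ^ (-(1/2) : ℝ) = Real.sqrt ((x-1)⁻¹) := by
      rw [Real.rpow_neg h1.le, Real.sqrt_eq_rpow, ← Real.inv_rpow h1.le]
    rw [hrw]
    apply Real.sqrt_le_sqrt
    rw [div_eq_mul_inv]
    nlinarith [inv_nonneg.2 h1.le]

lemma intInt : ∀ t : ℝ, 1 ≤ t → IntervalIntegrable fInt volume 1 t := by
  intro t ht
  have hg : IntervalIntegrable (fun x => Real.sqrt t * (x - 1) ^ (-(1/2) : ℝ)) volume 1 t := by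
    apply IntervalIntegrable.const_mul
    have := (intervalIntegral.intervalIntegrable_rpow' (a := 0) (b := t - 1)
      (r := -(1/2)) (by norm_num)).comp_sub_right 1
    simpa using this
  apply hg.mono_fun
  · apply Measurable.aestronglyMeasurable
    apply Measurable.sqrt
    exact measurable_id.div (measurable_id.sub measurable_const)
  · rw [Filter.EventuallyLE, ae_restrict_iff' measurableSet_uIoc]
    filter_upwards with x hx
    rw [Set.uIoc_of_le ht] at hx
    have h1x : 1 ≤ x := hx.1.le
    rw [Real.norm_eq_abs, Real.norm_eq_abs, abs_of_nonneg (fInt_nonneg x),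
      abs_of_nonneg]
    · exact fInt_le h1x hx.2
    · exact mul_nonneg (Real.sqrt_nonneg _) (Real.rpow_nonneg (by linarith) _)

/-- `G t = ∫_1^t (x/(x-1))^{1/2} dx`. -/
noncomputable def Gfun (t : ℝ) : ℝ := ∫ x in (1:ℝ)..t, Real.sqrt (x / (x - 1))

lemma Gfun_eq (t : ℝ) : Gfun t = ∫ x in (1:ℝ)..t, fInt x := rfl

lemma Gfun_one : Gfun 1 = 0 := intervalIntegral.integral_same

lemma intInt' {a b : ℝ} (ha : 1 ≤ a) (hab : a ≤ b) :
    IntervalIntegrable fInt volume a b :=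
  (intInt b (ha.trans hab)).mono_set
    (by rw [uIcc_of_le hab, uIcc_of_le (ha.trans hab)]; exact Icc_subset_Icc ha le_rfl)

lemma Gfun_sub {a b : ℝ} (ha : 1 ≤ a) (hab : a ≤ b) :
    Gfun b - Gfun a = ∫ x in a..b, fInt x := by
  have := intervalIntegral.integral_add_adjacent_intervals (intInt a ha) (intInt' ha hab)
  rw [Gfun_eq, Gfun_eq]
  linarith

lemma Gfun_lin {a b : ℝ} (ha : 1 ≤ a) (hab : a ≤ b) : b - a ≤ Gfun b - Gfun a := by
  rw [Gfun_sub ha hab]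
  have h2 := intInt' ha hab
  calc b - a = ∫ _x in a..b, (1:ℝ) := by simp
  _ ≤ ∫ x in a..b, fInt x := by
      apply intervalIntegral.integral_mono_ae_restrict hab intervalIntegrable_const h2
      have h1 : ∀ᵐ x ∂(volume.restrict (Icc a b)), x ∈ Icc a b :=
        ae_restrict_mem measurableSet_Icc
      have hne : ∀ᵐ x : ℝ ∂(volume.restrict (Icc a b)), x ≠ 1 := by
        apply ae_restrict_of_ae
        rw [ae_iff]
        simpa using Real.volume_singleton
      filter_upwards [h1, hne] with x hx hxne
      exact one_le_fInt (lt_of_le_of_ne (ha.trans hx.1) (Ne.symm hxne))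

lemma Gfun_mono : StrictMonoOn Gfun (Ici 1) := fun a ha _b _hb hab => by
  have := Gfun_lin ha hab.le; linarith

lemma int_rpow_eq {t : ℝ} (ht : 1 ≤ t) :
    ∫ x in (1:ℝ)..t, (x - 1) ^ (-(1/2) : ℝ) = 2 * Real.sqrt (t - 1) := by
  have h := intervalIntegral.integral_comp_sub_right (a := 1) (b := t)
    (fun x => x ^ (-(1/2) : ℝ)) 1
  rw [h]
  rw [integral_rpow (Or.inl (by norm_num))]
  rw [Real.sqrt_eq_rpow]
  norm_num
  ring

lemma Gfun_lower {t : ℝ} (ht : 1 ≤ t) : 2 * Real.sqrt (t - 1) ≤ Gfun t := by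
  rw [Gfun_eq, ← int_rpow_eq ht]
  apply intervalIntegral.integral_mono_on ht _ (intInt t ht)
  · exact fun x hx => fInt_ge hx.1
  · have := (intervalIntegral.intervalIntegrable_rpow' (a := 0) (b := t - 1)
      (r := -(1/2)) (by norm_num)).comp_sub_right 1
    simpa using this

lemma Gfun_upper {t : ℝ} (ht : 1 ≤ t) :
    Gfun t ≤ Real.sqrt t * (2 * Real.sqrt (t - 1)) := by
  rw [Gfun_eq, ← int_rpow_eq ht, ← intervalIntegral.integral_const_mul]
  apply intervalIntegral.integral_mono_on ht (intInt t ht)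
  · apply IntervalIntegrable.const_mul
    have := (intervalIntegral.intervalIntegrable_rpow' (a := 0) (b := t - 1)
      (r := -(1/2)) (by norm_num)).comp_sub_right 1
    simpa using this
  · exact fun x hx => fInt_le hx.1 hx.2

lemma Gfun_cont {b : ℝ} (hb : 1 ≤ b) : ContinuousOn Gfun (Icc 1 b) := by
  have hint : IntegrableOn fInt (uIcc 1 b) volume := by
    rw [uIcc_of_le hb]
    exact (intervalIntegrable_iff_integrableOn_Icc_of_le hb).1 (intInt b hb)
  have := intervalIntegral.continuousOn_primitive_interval (a := (1:ℝ)) (b := b) hint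
  rw [uIcc_of_le hb] at this
  exact this

lemma Gfun_image : Gfun '' (Ici 1) = Ici 0 := by
  apply Subset.antisymm
  · rintro y ⟨x, hx, rfl⟩
    have := Gfun_lin le_rfl hx
    rw [Gfun_one] at this
    have : (0:ℝ) ≤ Gfun x := by linarith [mem_Ici.1 hx]
    exact this
  · intro y hy
    have hy0 : (0:ℝ) ≤ y := hy
    set b := y + 1 with hb
    have hb1 : (1:ℝ) ≤ b := by linarith
    have hGb : y ≤ Gfun b := by
      have := Gfun_lin le_rfl hb1
      rw [Gfun_one] at this
      simpa [hb] using this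
    have := intermediate_value_Icc hb1 (Gfun_cont hb1)
    have hy' : y ∈ Icc (Gfun 1) (Gfun b) := by
      rw [Gfun_one]; exact ⟨hy0, hGb⟩
    obtain ⟨x, hx, hxy⟩ := this hy'
    exact ⟨x, hx.1, hxy⟩

section Hpart

variable {h : ℝ → ℝ} (hh : ∀ s : ℝ, h s ∈ Ici 1 ∧ Gfun (h s) = Real.sqrt 2 * |s|)

include hh

lemma h_one (s : ℝ) : 1 ≤ h s := (hh s).1

lemma h_G (s : ℝ) : Gfun (h s) = Real.sqrt 2 * |s| := (hh s).2

lemma h_ub (s : ℝ) : h s - 1 ≤ s ^ 2 / 2 := by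
  have hl := Gfun_lower (h_one hh s)
  rw [h_G hh s] at hl
  have e1 : Real.sqrt (h s - 1) ^ 2 = h s - 1 := Real.sq_sqrt (by linarith [h_one hh s])
  have e2 : Real.sqrt 2 ^ 2 = 2 := Real.sq_sqrt (by norm_num)
  nlinarith [sq_abs s, Real.sqrt_nonneg (h s - 1), abs_nonneg s, Real.sqrt_nonneg 2,
    sq_nonneg (Real.sqrt 2 * |s| - 2 * Real.sqrt (h s - 1))]

lemma h_lb (s : ℝ) : s ^ 2 / 2 ≤ h s * (h s - 1) := by
  have hu := Gfun_upper (h_one hh s)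
  rw [h_G hh s] at hu
  have e1 : Real.sqrt (h s - 1) ^ 2 = h s - 1 := Real.sq_sqrt (by linarith [h_one hh s])
  have e2 : Real.sqrt 2 ^ 2 = 2 := Real.sq_sqrt (by norm_num)
  have e3 : Real.sqrt (h s) ^ 2 = h s := Real.sq_sqrt (by linarith [h_one hh s])
  have hm := mul_self_le_mul_self (by positivity : (0:ℝ) ≤ Real.sqrt 2 * |s|) hu
  nlinarith [sq_abs s, Real.sqrt_nonneg (h s - 1), abs_nonneg s, Real.sqrt_nonneg 2,
    Real.sqrt_nonneg (h s)]

lemma h_zero : h 0 = 1 := by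
  have := h_ub hh 0
  have := h_one hh 0
  norm_num at *
  linarith

lemma h_gt {s : ℝ} (hs : s ≠ 0) : 1 < h s := by
  have hlb := h_lb hh s
  have h1 := h_one hh s
  have hs2 : 0 < s ^ 2 := by positivity
  nlinarith

lemma h_even (s : ℝ) : h (-s) = h s := by
  apply Gfun_mono.injOn (hh (-s)).1 (hh s).1
  rw [h_G hh, h_G hh, abs_neg]

lemma h_abs (s : ℝ) : h |s| = h s := by
  rcases abs_choice s with hc | hc
  · rw [hc]
  · rw [hc, h_even hh]

lemma h_mono_abs {a b : ℝ} (hab : a ≤ b) (ha : 0 ≤ a) : h a ≤ h b := by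
  by_contra hcon
  push_neg at hcon
  have := Gfun_mono (hh b).1 (hh a).1 hcon
  rw [h_G hh, h_G hh, abs_of_nonneg ha, abs_of_nonneg (ha.trans hab)] at this
  have h2 : (0:ℝ) < Real.sqrt 2 := Real.sqrt_pos.2 (by norm_num)
  nlinarith

lemma h_lipschitz (s t : ℝ) : |h s - h t| ≤ Real.sqrt 2 * |s - t| := by
  have key : ∀ u v : ℝ, |v| ≤ |u| → h u - h v ≤ Real.sqrt 2 * |u - v| ∧ 0 ≤ h u - h v := by
    intro u v huv
    have hmono : h v ≤ h u := by
      rw [← h_abs hh u, ← h_abs hh v]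
      exact h_mono_abs hh huv (abs_nonneg v)
    constructor
    · have hlin := Gfun_lin (h_one hh v) hmono
      rw [h_G hh, h_G hh] at hlin
      have habs : |u| - |v| ≤ |u - v| := abs_sub_abs_le_abs_sub u v
      have h2 : (0:ℝ) ≤ Real.sqrt 2 := Real.sqrt_nonneg 2
      nlinarith
    · linarith
  rcases le_total |t| |s| with hc | hc
  · obtain ⟨k1, k2⟩ := key s t hc
    rw [abs_of_nonneg k2]; exact k1
  · obtain ⟨k1, k2⟩ := key t s hc
    rw [abs_sub_comm, abs_of_nonneg k2, abs_sub_comm s t]; exact k1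

lemma h_cont : Continuous h := by
  have : LipschitzWith (Real.sqrt 2).toNNReal h := by
    apply LipschitzWith.of_dist_le_mul
    intro s t
    rw [Real.dist_eq, Real.dist_eq]
    have := h_lipschitz hh s t
    rwa [Real.coe_toNNReal _ (Real.sqrt_nonneg 2)]
  exact this.continuous

end Hpart

lemma fInt_measurable : Measurable fInt :=
  (measurable_id.div (measurable_id.sub measurable_const)).sqrt

lemma fInt_contAt {t : ℝ} (ht : 1 < t) : ContinuousAt fInt t := by
  have hden : t - 1 ≠ 0 := sub_ne_zero.2 (ne_of_gt ht)
  exact Real.continuous_sqrt.continuousAt.comp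
    (continuousAt_id.div (continuousAt_id.sub continuousAt_const) hden)

lemma hasDeriv_G {t : ℝ} (ht : 1 < t) : HasDerivAt Gfun (fInt t) t := by
  exact intervalIntegral.integral_hasDerivAt_right (intInt t ht.le)
    (fInt_measurable.stronglyMeasurable.stronglyMeasurableAtFilter)
    (fInt_contAt ht)

lemma fInt_pos {t : ℝ} (ht : 1 < t) : 0 < fInt t := lt_of_lt_of_le one_pos (one_le_fInt ht)

/-- the candidate for `deriv h` (up to sign). -/
noncomputable def phi (h : ℝ → ℝ) (s : ℝ) : ℝ := Real.sqrt (2 - 2 * (h s)⁻¹)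

/-- the candidate for `deriv h`. -/
noncomputable def psi (h : ℝ → ℝ) (s : ℝ) : ℝ := if s < 0 then -phi h s else phi h s

lemma sqrt2_ne : Real.sqrt 2 ≠ 0 := by positivity

lemma inv_calc {t : ℝ} (ht : 1 < t) :
    (fInt t / Real.sqrt 2)⁻¹ = Real.sqrt (2 - 2 * t⁻¹) := by
  have ht0 : (0:ℝ) < t := by linarith
  have h1 : (fInt t / Real.sqrt 2)⁻¹ = Real.sqrt 2 * (fInt t)⁻¹ := by
    rw [div_eq_mul_inv, mul_inv, inv_inv, mul_comm]
  rw [h1, fInt, ← Real.sqrt_inv, ← Real.sqrt_mul (by norm_num : (0:ℝ) ≤ 2)]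
  congr 1
  rw [inv_div]
  field_simp

section Hpart2

variable {h : ℝ → ℝ} (hh : ∀ s : ℝ, h s ∈ Ici 1 ∧ Gfun (h s) = Real.sqrt 2 * |s|)

include hh

lemma h_ne_zero (s : ℝ) : h s ≠ 0 := by have := h_one hh s; linarith

lemma h_deriv_ne_zero {s : ℝ} (hs : s ≠ 0) : phi h s ≠ 0 := by
  have hgt := h_gt hh hs
  have h0 : (0:ℝ) < h s := by linarith
  apply ne_of_gt
  apply Real.sqrt_pos.2
  have : (h s)⁻¹ < 1 := by
    rw [inv_lt_one_iff₀]; right; exact hgt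
  linarith

lemma h_hasDeriv_pos {s : ℝ} (hs : 0 < s) : HasDerivAt h (phi h s) s := by
  have hgt : 1 < h s := h_gt hh (ne_of_gt hs)
  have hf : HasDerivAt (fun t => Gfun t / Real.sqrt 2) (fInt (h s) / Real.sqrt 2) (h s) :=
    (hasDeriv_G hgt).div_const _
  have hne : fInt (h s) / Real.sqrt 2 ≠ 0 := by
    apply ne_of_gt
    exact div_pos (fInt_pos hgt) (Real.sqrt_pos.2 (by norm_num))
  have hev : ∀ᶠ y in nhds s, Gfun (h y) / Real.sqrt 2 = y := by
    filter_upwards [eventually_gt_nhds hs] with y hy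
    rw [h_G hh, abs_of_pos hy, mul_comm, mul_div_assoc, div_self sqrt2_ne, mul_one]
  have := HasDerivAt.of_local_left_inverse (h_cont hh).continuousAt hf hne hev
  rwa [inv_calc hgt] at this

lemma h_hasDeriv_neg {s : ℝ} (hs : s < 0) : HasDerivAt h (-phi h s) s := by
  have hgt : 1 < h s := h_gt hh (ne_of_lt hs)
  have hf : HasDerivAt (fun t => -(Gfun t / Real.sqrt 2)) (-(fInt (h s) / Real.sqrt 2)) (h s) :=
    ((hasDeriv_G hgt).div_const _).neg
  have hne : -(fInt (h s) / Real.sqrt 2) ≠ 0 := by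
    simp only [ne_eq, neg_eq_zero]
    exact ne_of_gt (div_pos (fInt_pos hgt) (Real.sqrt_pos.2 (by norm_num)))
  have hev : ∀ᶠ y in nhds s, -(Gfun (h y) / Real.sqrt 2) = y := by
    filter_upwards [eventually_lt_nhds hs] with y hy
    rw [h_G hh, abs_of_neg hy, mul_comm, mul_div_assoc, div_self sqrt2_ne, mul_one, neg_neg]
  have := HasDerivAt.of_local_left_inverse (h_cont hh).continuousAt hf hne hev
  rwa [inv_neg, inv_calc hgt] at this

lemma h_hasDeriv_zero : HasDerivAt h 0 0 := by
  rw [hasDerivAt_iff_tendsto_slope]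
  apply squeeze_zero_norm' (a := fun s => |s| / 2)
  · filter_upwards [self_mem_nhdsWithin] with s hs
    have hs0 : s ≠ 0 := hs
    rw [slope_def_field, h_zero hh]
    have hub := h_ub hh s
    have h1 := h_one hh s
    rw [Real.norm_eq_abs, abs_div, abs_of_nonneg (by linarith : (0:ℝ) ≤ h s - 1)]
    rw [sub_zero, div_le_div_iff₀ (abs_pos.2 hs0) (by norm_num : (0:ℝ) < 2)]
    calc (h s - 1) * 2 ≤ s ^ 2 := by linarith
    _ = |s| * |s| := by rw [sq, ← abs_mul_abs_self]
  · have : Tendsto (fun s : ℝ => |s| / 2) (nhds 0) (nhds 0) := by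
      have := (continuous_abs.tendsto (0:ℝ)).div_const 2
      simpa using this
    exact this.mono_left nhdsWithin_le_nhds

lemma h_hasDeriv (s : ℝ) : HasDerivAt h (psi h s) s := by
  rcases lt_trichotomy s 0 with hs | rfl | hs
  · rw [psi, if_pos hs]; exact h_hasDeriv_neg hh hs
  · have : psi h 0 = 0 := by
      rw [psi, if_neg (lt_irrefl 0), phi, h_zero hh]
      norm_num
    rw [this]; exact h_hasDeriv_zero hh
  · rw [psi, if_neg (not_lt.2 hs.le)]; exact h_hasDeriv_pos hh hs

lemma h_deriv_eq : deriv h = psi h := funext fun s => (h_hasDeriv hh s).deriv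

end Hpart2

section Hpart3

variable {h : ℝ → ℝ} (hh : ∀ s : ℝ, h s ∈ Ici 1 ∧ Gfun (h s) = Real.sqrt 2 * |s|)

include hh

lemma arg_pos {s : ℝ} (hs : s ≠ 0) : 0 < 2 - 2 * (h s)⁻¹ := by
  have hgt := h_gt hh hs
  have h0 : (0:ℝ) < h s := by linarith
  have : (h s)⁻¹ < 1 := by rw [inv_lt_one_iff₀]; right; exact hgt
  linarith

lemma phi_hasDeriv {s : ℝ} (hs : s ≠ 0) :
    HasDerivAt (phi h) (psi h s / ((h s) ^ 2 * phi h s)) s := by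
  have hd := h_hasDeriv hh s
  have hne := h_ne_zero hh s
  have hpos := arg_pos hh hs
  have hu : HasDerivAt (fun y => 2 - 2 * (h y)⁻¹)
      (-(2 * (-psi h s / h s ^ 2))) s := ((hd.inv hne).const_mul 2).const_sub 2
  have hsq := Real.hasDerivAt_sqrt (ne_of_gt hpos)
  have hcomp := hsq.comp s hu
  have hval : 1 / (2 * Real.sqrt (2 - 2 * (h s)⁻¹)) * -(2 * (-psi h s / h s ^ 2))
      = psi h s / ((h s) ^ 2 * phi h s) := by
    have hphine : phi h s ≠ 0 := h_deriv_ne_zero hh hs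
    rw [show Real.sqrt (2 - 2 * (h s)⁻¹) = phi h s from rfl]
    field_simp
  rw [hval] at hcomp
  exact hcomp

lemma phi_bounds {s : ℝ} (hs : s ≠ 0) : |s| / h s ≤ phi h s ∧ phi h s ≤ |s| := by
  have hgt := h_gt hh hs
  have hub := h_ub hh s
  have hlb := h_lb hh s
  have h0 : (0:ℝ) < h s := by linarith
  have hi : h s * (h s)⁻¹ = 1 := mul_inv_cancel₀ (ne_of_gt h0)
  constructor
  · rw [phi, Real.le_sqrt (by positivity)]
    · rw [div_pow, sq_abs]
      rw [div_le_iff₀ (by positivity)]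
      nlinarith [sq_nonneg (h s)]
    · linarith [arg_pos hh hs]
  · rw [phi]
    calc Real.sqrt (2 - 2 * (h s)⁻¹) ≤ Real.sqrt (s ^ 2) := by
          apply Real.sqrt_le_sqrt
          nlinarith [sq_nonneg s]
    _ = |s| := Real.sqrt_sq_eq_abs s

lemma psi_slope_bound {s : ℝ} (hs : s ≠ 0) : |psi h s / s - 1| ≤ s ^ 2 / 2 := by
  have hgt := h_gt hh hs
  have hub := h_ub hh s
  have h0 : (0:ℝ) < h s := by linarith
  have hi : h s * (h s)⁻¹ = 1 := mul_inv_cancel₀ (ne_of_gt h0)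
  obtain ⟨hA, hB⟩ := phi_bounds hh hs
  have habs : 0 < |s| := abs_pos.2 hs
  have hslope : psi h s / s = phi h s / |s| := by
    rcases lt_or_gt_of_ne hs with hneg | hpos
    · rw [psi, if_pos hneg, abs_of_neg hneg, div_neg, neg_div]
    · rw [psi, if_neg (not_lt.2 hpos.le), abs_of_pos hpos]
  rw [hslope]
  have hx1 : phi h s / |s| ≤ 1 := (div_le_one habs).2 hB
  have hx2 : (h s)⁻¹ ≤ phi h s / |s| := by
    rw [le_div_iff₀ habs]
    calc (h s)⁻¹ * |s| = |s| / h s := by rw [div_eq_mul_inv]; ring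
    _ ≤ phi h s := hA
  rw [abs_le]
  constructor
  · nlinarith [sq_nonneg (h s - 1)]
  · nlinarith [sq_nonneg s]

lemma psi_hasDeriv (s : ℝ) : HasDerivAt (psi h) (1 / (h s) ^ 2) s := by
  rcases lt_trichotomy s 0 with hs | rfl | hs
  · have hphi := (phi_hasDeriv hh (ne_of_lt hs)).neg
    have heq : psi h =ᶠ[nhds s] fun y => -phi h y := by
      filter_upwards [eventually_lt_nhds hs] with y hy
      rw [psi, if_pos hy]
    have hval : -(psi h s / ((h s) ^ 2 * phi h s)) = 1 / (h s) ^ 2 := by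
      rw [psi, if_pos hs]
      have hphine : phi h s ≠ 0 := h_deriv_ne_zero hh (ne_of_lt hs)
      have hne := h_ne_zero hh s
      field_simp
    rw [← hval]
    exact hphi.congr_of_eventuallyEq heq
  · rw [hasDerivAt_iff_tendsto_slope]
    have hgoal : Tendsto (fun s : ℝ => psi h s / s) (nhdsWithin 0 {0}ᶜ) (nhds 1) := by
      have key : Tendsto (fun s : ℝ => psi h s / s - 1) (nhdsWithin 0 {0}ᶜ) (nhds 0) := by
        apply squeeze_zero_norm' (a := fun s : ℝ => s ^ 2 / 2)
        · filter_upwards [self_mem_nhdsWithin] with s hs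
          exact psi_slope_bound hh hs
        · have : Tendsto (fun s : ℝ => s ^ 2 / 2) (nhds 0) (nhds 0) := by
            have := ((continuous_pow 2).tendsto (0:ℝ)).div_const 2
            simpa using this
          exact this.mono_left nhdsWithin_le_nhds
      have := key.add (tendsto_const_nhds (x := (1:ℝ)))
      simpa using this
    have hval : (1:ℝ) = 1 / (h 0) ^ 2 := by rw [h_zero hh]; norm_num
    rw [← hval]
    apply hgoal.congr'
    filter_upwards [self_mem_nhdsWithin] with s hs
    rw [slope_def_field]
    have : psi h 0 = 0 := by
      rw [psi, if_neg (lt_irrefl 0), phi, h_zero hh]; norm_num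
    rw [this, sub_zero, sub_zero]
  · have hphi := phi_hasDeriv hh (ne_of_gt hs)
    have heq : psi h =ᶠ[nhds s] phi h := by
      filter_upwards [eventually_gt_nhds hs] with y hy
      rw [psi, if_neg (not_lt.2 hy.le)]
    have hval : psi h s / ((h s) ^ 2 * phi h s) = 1 / (h s) ^ 2 := by
      rw [psi, if_neg (not_lt.2 hs.le)]
      have hphine : phi h s ≠ 0 := h_deriv_ne_zero hh (ne_of_gt hs)
      have hne := h_ne_zero hh s
      field_simp
    rw [← hval]
    exact hphi.congr_of_eventuallyEq heq

end Hpart3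

theorem inverse_of_G_solves_ODE :
    StrictMonoOn Gfun (Ici 1) ∧ Gfun '' (Ici 1) = Ici 0 ∧
    ∀ h : ℝ → ℝ, (∀ s : ℝ, h s ∈ Ici 1 ∧ Gfun (h s) = Real.sqrt 2 * |s|) →
      ContDiff ℝ 2 h ∧ (∀ s, (h s) ^ 2 * deriv (deriv h) s = 1) ∧
      h 0 = 1 ∧ deriv h 0 = 0 ∧ (∀ s, 1 ≤ h s) ∧ ConvexOn ℝ univ h := by
  refine ⟨Gfun_mono, Gfun_image, ?_⟩
  intro h hh
  have hd1 : ∀ s, HasDerivAt h (psi h s) s := h_hasDeriv hh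
  have hd2 : ∀ s, HasDerivAt (psi h) (1 / (h s) ^ 2) s := psi_hasDeriv hh
  have hde : deriv h = psi h := h_deriv_eq hh
  have hdd : deriv (deriv h) = fun s => 1 / (h s) ^ 2 := by
    rw [hde]; exact funext fun s => (hd2 s).deriv
  have hcont : Continuous h := h_cont hh
  have hcdd : Continuous fun s => 1 / (h s) ^ 2 := by
    apply continuous_const.div (hcont.pow 2)
    intro s; exact pow_ne_zero 2 (h_ne_zero hh s)
  refine ⟨?_, ?_, h_zero hh, ?_, h_one hh, ?_⟩
  · -- ContDiff ℝ 2 h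
    have h2 : (2 : WithTop ℕ∞) = 1 + 1 := by norm_num
    rw [h2, contDiff_succ_iff_deriv]
    refine ⟨fun s => (hd1 s).differentiableAt, by simp, ?_⟩
    rw [contDiff_one_iff_deriv, hde]
    exact ⟨fun s => (hd2 s).differentiableAt,
      funext (fun s => (hd2 s).deriv) ▸ hcdd⟩
  · intro s
    rw [hdd]
    field_simp
    exact div_self (h_ne_zero hh s)
  · rw [hde, psi, if_neg (lt_irrefl 0), phi, h_zero hh]
    norm_num
  · apply convexOn_of_deriv2_nonneg convex_univ hcont.continuousOn
    · intro x _
      exact (hd1 x).differentiableAt.differentiableWithinAt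
    · intro x _
      rw [hde]
      exact (hd2 x).differentiableAt.differentiableWithinAt
    · intro x _
      have : deriv^[2] h x = deriv (deriv h) x := rfl
      rw [this, hdd]
      positivity
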